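/- arXiv:1201.2344 — 5 statements merged into one kernel-verified Lean document; each statement's English description precedes it below -/
import Mathlib

section
/- Let 𝒞 be a connected component of the germ-grain surface ω̄ and let T be a hole of 𝒞, i.e. a bounded connected component of ℝ² ∖ 𝒞. Then every point x ∈ ℝ² with x ∉ 𝒞 and x ∉ T satisfies d(x,T)² ≥ d(x,𝒞)² + 2·d(x,𝒞)·R₀, where d(x,S) denotes the Euclidean infimum distance from the point x to the set S. -/
open Metric Set

/-- The germ-grain surface of a finite configuration: the union of the closed balls. -/
def surface (ω : Finset (EuclideanSpace ℝ (Fin 2) × ℝ)) : Set (EuclideanSpace ℝ (Fin 2)) :=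
  ⋃ p ∈ ω, Metric.closedBall p.1 p.2

/-- `C` is a connected component of `S`. -/
def IsCompOf (C S : Set (EuclideanSpace ℝ (Fin 2))) : Prop :=
  ∃ x ∈ S, C = connectedComponentIn S x

/-- `T` is a hole of `S`: a bounded connected component of the complement of `S`. -/
def IsHoleOf (T S : Set (EuclideanSpace ℝ (Fin 2))) : Prop :=
  (∃ t ∈ Sᶜ, T = connectedComponentIn Sᶜ t) ∧ Bornology.IsBounded T

/-- If a segment from `x` to `t` meets the closed ball `B(y,R)` while both endpoints are
strictly outside it, then `dist x y ^ 2 - R ^ 2 ≤ dist x t ^ 2` (tangent line estimate). -/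
lemma seg_ball_est {E : Type*} [NormedAddCommGroup E] [InnerProductSpace ℝ E]
    (x t y z : E) (R : ℝ) (hz : z ∈ segment ℝ x t) (hzy : dist z y ≤ R)
    (hxy : R < dist x y) (hty : R < dist t y) :
    dist x y ^ 2 - R ^ 2 ≤ dist x t ^ 2 := by
  obtain ⟨a, b, ha, hb, hab, hzeq⟩ := hz
  have haa : a = 1 - b := by linarith
  subst haa
  set u : E := x - y with hu
  set v : E := t - x with hv
  have hz' : z - y = u + b • v := by
    rw [hu, hv, ← hzeq]
    module
  have e1 : dist z y ^ 2 = ‖u‖ ^ 2 + 2 * (b * inner ℝ u v) + b ^ 2 * ‖v‖ ^ 2 := by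
    rw [dist_eq_norm, hz', norm_add_sq_real, real_inner_smul_right, norm_smul, mul_pow,
      Real.norm_eq_abs, sq_abs]
  have e2 : dist t y ^ 2 = ‖u‖ ^ 2 + 2 * inner ℝ u v + ‖v‖ ^ 2 := by
    have : t - y = u + v := by rw [hu, hv]; abel
    rw [dist_eq_norm, this, norm_add_sq_real]
  have e3 : dist x t = ‖v‖ := by rw [dist_eq_norm, hv, ← norm_neg]; congr 1; abel
  have e4 : dist x y = ‖u‖ := by rw [dist_eq_norm, hu]
  have hR0 : 0 ≤ R := le_trans dist_nonneg hzy
  have hty2 : R ^ 2 < ‖u‖ ^ 2 + 2 * inner ℝ u v + ‖v‖ ^ 2 := by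
    rw [← e2]; nlinarith [dist_nonneg (x := t) (y := y)]
  rw [e4] at hxy ⊢
  rw [e3]
  have h1 : ‖u‖ ^ 2 + 2 * (b * inner ℝ u v) + b ^ 2 * ‖v‖ ^ 2 ≤ R ^ 2 := by
    rw [← e1]; nlinarith [dist_nonneg (x := z) (y := y), hzy]
  have hv0 : (0:ℝ) ≤ ‖v‖ ^ 2 := by positivity
  by_contra hcon
  push_neg at hcon
  have hS : 0 ≤ (1 - b) * (R ^ 2 - ‖u‖ ^ 2 + b * ‖v‖ ^ 2) := by
    nlinarith [mul_nonneg hb (le_of_lt (sub_pos.mpr hty2))]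
  have hX : R ^ 2 - ‖u‖ ^ 2 + b * ‖v‖ ^ 2 < 0 := by
    nlinarith [mul_nonneg ha hv0]
  have ha0 : 1 - b ≤ 0 := by
    by_contra h
    push_neg at h
    nlinarith [mul_pos h (show (0:ℝ) < -(R ^ 2 - ‖u‖ ^ 2 + b * ‖v‖ ^ 2) by linarith)]
  have hb1 : b = 1 := by linarith
  rw [hb1] at h1
  nlinarith [h1, hty2]

theorem stmt_0 (R₀ R₁ : ℝ) (hR₀ : 0 < R₀) (hR₀₁ : R₀ ≤ R₁)
    (ω : Finset (EuclideanSpace ℝ (Fin 2) × ℝ))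
    (hω : ∀ p ∈ ω, p.2 ∈ Set.Icc R₀ R₁)
    (C T : Set (EuclideanSpace ℝ (Fin 2)))
    (hC : IsCompOf C (surface ω))
    (hT : IsHoleOf T C)
    (x : EuclideanSpace ℝ (Fin 2)) (hxC : x ∉ C) (hxT : x ∉ T) :
    Metric.infDist x C ^ 2 + 2 * Metric.infDist x C * R₀ ≤ Metric.infDist x T ^ 2 := by
  obtain ⟨x₀, hx₀S, hCdef⟩ := hC
  obtain ⟨⟨t₀, ht₀, hTdef⟩, hTbdd⟩ := hT
  set d := Metric.infDist x C with hd
  have hd0 : 0 ≤ d := Metric.infDist_nonneg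
  have hTne : T.Nonempty := by
    refine ⟨t₀, ?_⟩
    rw [hTdef]
    exact mem_connectedComponentIn ht₀
  -- per point bound
  have key : ∀ t ∈ T, d ^ 2 + 2 * d * R₀ ≤ dist x t ^ 2 := by
    intro t ht
    have hTsub : T ⊆ Cᶜ := by rw [hTdef]; exact connectedComponentIn_subset _ _
    have htc : t ∈ Cᶜ := hTsub ht
    have hxc : x ∈ Cᶜ := hxC
    -- the segment from x to t meets C
    have hseg : ∃ z ∈ segment ℝ x t, z ∈ C := by
      by_contra h
      push_neg at h
      have hsub : segment ℝ x t ⊆ Cᶜ := fun z hz => h z hz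
      have hconn : IsPreconnected (segment ℝ x t) := (convex_segment x t).isPreconnected
      have hts : t ∈ segment ℝ x t := right_mem_segment ℝ x t
      have hsubT : segment ℝ x t ⊆ connectedComponentIn Cᶜ t :=
        hconn.subset_connectedComponentIn hts hsub
      have hTeq : connectedComponentIn Cᶜ t = T := by
        rw [hTdef] at ht ⊢
        exact (connectedComponentIn_eq ht).symm
      exact hxT (hTeq ▸ hsubT (left_mem_segment ℝ x t))
    obtain ⟨z, hzseg, hzC⟩ := hseg
    have hCsub : C ⊆ surface ω := by rw [hCdef]; exact connectedComponentIn_subset _ _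
    have hzS : z ∈ surface ω := hCsub hzC
    obtain ⟨p, hp, hzball⟩ : ∃ p ∈ ω, z ∈ Metric.closedBall p.1 p.2 := by
      simpa [surface] using hzS
    obtain ⟨hR₀p, hpR₁⟩ := hω p hp
    set y := p.1
    set R := p.2
    have hRpos : 0 < R := lt_of_lt_of_le hR₀ hR₀p
    -- the ball is contained in C
    have hballS : Metric.closedBall y R ⊆ surface ω := by
      intro w hw
      exact Set.mem_biUnion hp hw
    have hballC : Metric.closedBall y R ⊆ C := by
      have hCz : connectedComponentIn (surface ω) z = C := by
        rw [hCdef] at hzC ⊢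
        exact (connectedComponentIn_eq hzC).symm
      rw [← hCz]
      exact (convex_closedBall y R).isPreconnected.subset_connectedComponentIn hzball hballS
    -- x and t are strictly outside the ball
    have hxball : R < dist x y := by
      by_contra h
      push_neg at h
      exact hxC (hballC (Metric.mem_closedBall.mpr h))
    have htball : R < dist t y := by
      by_contra h
      push_neg at h
      exact htc (hballC (Metric.mem_closedBall.mpr h))
    -- d ≤ dist x y - R : witness point on the ball towards x
    have hdle : d ≤ dist x y - R := by
      set a := dist x y with ha
      have ha0 : 0 < a := lt_trans hRpos hxball
      set w : EuclideanSpace ℝ (Fin 2) := y + (R / a) • (x - y) with hw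
      have hwball : w ∈ Metric.closedBall y R := by
        rw [Metric.mem_closedBall, dist_eq_norm]
        have : w - y = (R / a) • (x - y) := by rw [hw]; abel
        rw [this, norm_smul, Real.norm_eq_abs, abs_of_pos (div_pos hRpos ha0)]
        rw [← dist_eq_norm, ← ha, div_mul_cancel₀ _ (ne_of_gt ha0)]
      have hwd : dist x w = a - R := by
        rw [dist_eq_norm]
        have : x - w = (1 - R / a) • (x - y) := by rw [hw]; module
        rw [this, norm_smul, Real.norm_eq_abs, ← dist_eq_norm, ← ha]
        rw [abs_of_nonneg (by rw [sub_nonneg]; exact (div_le_one ha0).mpr (le_of_lt hxball))]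
        field_simp
      calc d ≤ dist x w := Metric.infDist_le_dist_of_mem (hballC hwball)
        _ = a - R := hwd
    have hest : dist x y ^ 2 - R ^ 2 ≤ dist x t ^ 2 :=
      seg_ball_est x t y z R hzseg (Metric.mem_closedBall.mp hzball) hxball htball
    nlinarith [hd0, hR₀p, hdle, hxball, hRpos]
  -- conclude via infDist
  have hrhs0 : 0 ≤ d ^ 2 + 2 * d * R₀ := by positivity
  have hsq : Real.sqrt (d ^ 2 + 2 * d * R₀) ≤ Metric.infDist x T := by
    by_contra h
    push_neg at h
    obtain ⟨t, ht, hlt⟩ := (Metric.infDist_lt_iff hTne).mp h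
    have h1 : dist x t ^ 2 < d ^ 2 + 2 * d * R₀ := by
      have h2 : dist x t < Real.sqrt (d ^ 2 + 2 * d * R₀) := hlt
      nlinarith [Real.sq_sqrt hrhs0, dist_nonneg (x := x) (y := t),
        Real.sqrt_nonneg (d ^ 2 + 2 * d * R₀)]
    exact absurd (key t ht) (not_le.mpr h1)
  have h0T : 0 ≤ Metric.infDist x T := Metric.infDist_nonneg
  nlinarith [Real.sq_sqrt hrhs0, Real.sqrt_nonneg (d ^ 2 + 2 * d * R₀)]
end

section
/- Let 𝒞 and 𝒞' be two distinct connected components of the germ-grain surface ω̄, let (x,R) ∈ ω be such that B̄(x,R) ⊆ 𝒞, and let T' be a hole of 𝒞' (a bounded connected component of ℝ² ∖ 𝒞') with x ∉ T'. Then the Euclidean distance from x to T' is at least √3 · R₀. -/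
open Metric Set

/-- A preconnected set meeting both a set and its complement meets the frontier. -/
lemma aux_inter_frontier {α : Type*} [TopologicalSpace α] {s u : Set α}
    (hs : IsPreconnected s) (h1 : (s ∩ u).Nonempty) (h2 : (s \ u).Nonempty) :
    (s ∩ frontier u).Nonempty := by
  by_contra h
  rw [Set.not_nonempty_iff_eq_empty] at h
  have hsub : s ⊆ interior u ∪ interior uᶜ := by
    intro z hz
    have hzf : z ∉ frontier u := fun hf => (Set.eq_empty_iff_forall_notMem.mp h z) ⟨hz, hf⟩
    by_cases hzu : z ∈ u
    · left
      have : z ∈ closure u := subset_closure hzu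
      rw [frontier, Set.mem_diff] at hzf
      push_neg at hzf
      exact hzf this
    · right
      have : z ∈ closure uᶜ := subset_closure hzu
      rw [← frontier_compl] at hzf
      rw [frontier, Set.mem_diff] at hzf
      push_neg at hzf
      exact hzf this
  obtain ⟨z1, hz1⟩ := h1
  obtain ⟨z2, hz2⟩ := h2
  have hne1 : (s ∩ interior u).Nonempty := by
    refine ⟨z1, hz1.1, ?_⟩
    rcases hsub hz1.1 with h' | h'
    · exact h'
    · exact absurd hz1.2 (fun hu => interior_subset h' hu)
  have hne2 : (s ∩ interior uᶜ).Nonempty := by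
    refine ⟨z2, hz2.1, ?_⟩
    rcases hsub hz2.1 with h' | h'
    · exact absurd (interior_subset h') hz2.2
    · exact h'
  obtain ⟨w, -, hw1, hw2⟩ := hs (interior u) (interior uᶜ) isOpen_interior isOpen_interior
    hsub hne1 hne2
  exact (interior_subset hw2) (interior_subset hw1)

theorem stmt_1 (R₀ R₁ : ℝ) (hR₀ : 0 < R₀) (hR₀₁ : R₀ ≤ R₁)
    (ω : Finset (EuclideanSpace ℝ (Fin 2) × ℝ))
    (hω : ∀ p ∈ ω, p.2 ∈ Set.Icc R₀ R₁)
    (C C' : Set (EuclideanSpace ℝ (Fin 2)))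
    (hC : IsCompOf C (surface ω)) (hC' : IsCompOf C' (surface ω)) (hne : C ≠ C')
    (x : EuclideanSpace ℝ (Fin 2)) (R : ℝ) (hmem : (x, R) ∈ ω)
    (hball : Metric.closedBall x R ⊆ C)
    (T' : Set (EuclideanSpace ℝ (Fin 2))) (hT' : IsHoleOf T' C') (hxT' : x ∉ T') :
    Real.sqrt 3 * R₀ ≤ Metric.infDist x T' := by
  obtain ⟨x₀, hx₀, hCeq⟩ := hC
  obtain ⟨x₁, hx₁, hC'eq⟩ := hC'
  obtain ⟨⟨t, ht, hTeq⟩, hTbd⟩ := hT'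
  -- basic topological facts
  have hScompact : IsCompact (surface ω) :=
    ω.finite_toSet.isCompact_biUnion (fun p _ => isCompact_closedBall p.1 p.2)
  have hCC' : Disjoint C C' := by
    rw [Set.disjoint_left]
    intro w hw hw'
    apply hne
    rw [hCeq] at hw ⊢
    rw [hC'eq] at hw' ⊢
    rw [connectedComponentIn_eq hw, connectedComponentIn_eq hw']
  have hC'closed : IsClosed C' := by
    rw [hC'eq, connectedComponentIn_eq_image hx₁]
    have : CompactSpace (surface ω) := isCompact_iff_compactSpace.mp hScompact
    exact (isClosed_connectedComponent.isCompact.image continuous_subtype_val).isClosed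
  have hopen : IsOpen C'ᶜ := hC'closed.isOpen_compl
  have hT'sub : T' ⊆ C'ᶜ := hTeq ▸ connectedComponentIn_subset _ _
  have hT'open : IsOpen T' := hTeq ▸ hopen.connectedComponentIn
  have hfront : frontier T' ⊆ C' := by
    intro p hp
    by_contra hpc
    have hpcl : p ∈ closure T' := hp.1
    have hopenc : IsOpen (connectedComponentIn C'ᶜ p) := hopen.connectedComponentIn
    have hpmem : p ∈ connectedComponentIn C'ᶜ p := mem_connectedComponentIn hpc
    obtain ⟨q, hq1, hq2⟩ := mem_closure_iff.mp hpcl _ hopenc hpmem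
    have hq2' : q ∈ connectedComponentIn C'ᶜ t := by rw [hTeq] at hq2; exact hq2
    have heq : connectedComponentIn C'ᶜ p = T' := by
      rw [connectedComponentIn_eq hq1, ← connectedComponentIn_eq hq2']
      exact hTeq.symm
    have hpT : p ∈ T' := heq ▸ hpmem
    rw [frontier, hT'open.interior_eq] at hp
    exact hp.2 hpT
  have hT'ne : T'.Nonempty := ⟨t, hTeq ▸ mem_connectedComponentIn ht⟩
  -- pointwise bound
  have main : ∀ z ∈ T', Real.sqrt 3 * R₀ ≤ dist x z := by
    intro z hz
    have hseg : IsPreconnected (segment ℝ x z) := (convex_segment x z).isPreconnected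
    obtain ⟨p, hpseg, hpfr⟩ := aux_inter_frontier hseg
      ⟨z, right_mem_segment ℝ x z, hz⟩ ⟨x, left_mem_segment ℝ x z, hxT'⟩
    have hpC' : p ∈ C' := hfront hpfr
    have hpS : p ∈ surface ω := by
      rw [hC'eq] at hpC'
      exact connectedComponentIn_subset _ _ hpC'
    obtain ⟨q, hq, hpball⟩ : ∃ q ∈ ω, p ∈ closedBall q.1 q.2 := by
      simpa [surface] using hpS
    obtain ⟨y, r⟩ := q
    simp only at hpball
    have hr : r ∈ Set.Icc R₀ R₁ := hω _ hq
    have hR : R ∈ Set.Icc R₀ R₁ := hω _ hmem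
    have hC'st : C' = connectedComponentIn (surface ω) p := by
      rw [hC'eq, connectedComponentIn_eq (hC'eq ▸ hpC')]
    have hballsub : closedBall y r ⊆ surface ω := by
      intro w hw
      exact Set.mem_biUnion hq hw
    have hballC' : closedBall y r ⊆ C' := by
      rw [hC'st]
      exact (convex_closedBall y r).isPreconnected.subset_connectedComponentIn hpball hballsub
    have hdisj : Disjoint (closedBall x R) (closedBall y r) :=
      hCC'.mono hball hballC'
    have hxy : R + r < dist x y :=
      (disjoint_closedBall_closedBall_iff (hR₀.le.trans hR.1) (hR₀.le.trans hr.1)).mp hdisj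
    have hzy : r < dist z y := by
      by_contra h
      push_neg at h
      exact (hT'sub hz) (hballC' (mem_closedBall.mpr h))
    obtain ⟨a, b, ha, hb, hab, hp⟩ := hpseg
    -- vector computation
    set u : EuclideanSpace ℝ (Fin 2) := x - y with hu
    set v : EuclideanSpace ℝ (Fin 2) := z - y with hv
    have hpy : p - y = a • u + b • v := by
      rw [← hp, hu, hv]
      rw [smul_sub, smul_sub]
      have : (a + b) • y = y := by rw [hab, one_smul]
      rw [show a • x + b • z - y = a • x + b • z - (a + b) • y by rw [this], add_smul]
      abel
    have expand : ‖a • u + b • v‖ ^ 2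
        = a ^ 2 * ‖u‖ ^ 2 + 2 * (a * b * inner ℝ u v) + b ^ 2 * ‖v‖ ^ 2 := by
      rw [norm_add_sq_real, norm_smul, norm_smul, real_inner_smul_left, real_inner_smul_right]
      simp only [Real.norm_eq_abs]
      rw [mul_pow, mul_pow, sq_abs, sq_abs]
      ring
    have e2 : dist x z ^ 2 = ‖u‖ ^ 2 - 2 * (inner ℝ u v : ℝ) + ‖v‖ ^ 2 := by
      rw [dist_eq_norm, show x - z = u - v by rw [hu, hv]; abel, norm_sub_sq_real]
    have hdxy : dist x y = ‖u‖ := dist_eq_norm x y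
    have hdzy : dist z y = ‖v‖ := dist_eq_norm z y
    have hdp : ‖a • u + b • v‖ ≤ r := by
      rw [← hpy, ← dist_eq_norm]
      exact mem_closedBall.mp hpball
    have hdp2 : ‖a • u + b • v‖ ^ 2 ≤ r ^ 2 :=
      pow_le_pow_left₀ (norm_nonneg _) hdp 2
    have h0Rr : (0:ℝ) ≤ R + r := by
      have := hR.1; have := hr.1; linarith
    have hA : (R + r) ^ 2 < ‖u‖ ^ 2 := by
      rw [← hdxy]; nlinarith [hxy, h0Rr]
    have hB : r ^ 2 < ‖v‖ ^ 2 := by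
      rw [← hdzy]
      have h0r : (0:ℝ) ≤ r := hR₀.le.trans hr.1
      nlinarith [hzy, h0r]
    have hL0 : (0:ℝ) ≤ dist x z := dist_nonneg
    set A := ‖u‖ ^ 2 with hAdef
    set B := ‖v‖ ^ 2 with hBdef
    set L := dist x z with hLdef
    set I : ℝ := inner ℝ u v with hIdef
    have hI : 2 * I = A + B - L ^ 2 := by rw [hIdef, hAdef, hBdef, hLdef]; linarith [e2]
    rw [expand] at hdp2
    have ident : a * A + b * B - a * b * L ^ 2 = a ^ 2 * A + 2 * (a * b * I) + b ^ 2 * B := by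
      linear_combination (-(a * b)) * hI + (-(a * A + b * B)) * hab
    have comb : a * A + b * B - a * b * L ^ 2 ≤ r ^ 2 := by rw [ident]; exact hdp2
    have hapos : 0 < a := by
      rcases lt_or_ge 0 a with h | h
      · exact h
      · exfalso
        have ha0 : a = 0 := le_antisymm h ha
        have hb1 : b = 1 := by linarith
        rw [ha0, hb1] at comb
        simp at comb
        linarith [hB]
    have h5 : a * (R + r) ^ 2 + b * r ^ 2 - a * b * L ^ 2 < r ^ 2 := by
      have t1 : a * (R + r) ^ 2 < a * A := mul_lt_mul_of_pos_left hA hapos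
      have t2 : b * r ^ 2 ≤ b * B := mul_le_mul_of_nonneg_left hB.le hb
      linarith
    have h6 : (R + r) ^ 2 - r ^ 2 - b * L ^ 2 < 0 := by
      by_contra hcon
      push_neg at hcon
      have t3 : 0 ≤ a * ((R + r) ^ 2 - r ^ 2 - b * L ^ 2) := mul_nonneg hapos.le hcon
      have hbr : b * r ^ 2 = (1 - a) * r ^ 2 := by rw [show b = 1 - a by linarith]
      have texp : a * ((R + r) ^ 2 - r ^ 2 - b * L ^ 2)
          = a * (R + r) ^ 2 - a * r ^ 2 - a * b * L ^ 2 := by ring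
      rw [texp] at t3
      have hbr' : b * r ^ 2 = r ^ 2 - a * r ^ 2 := by rw [hbr]; ring
      linarith [h5, t3, hbr']
    have h7 : 3 * R₀ ^ 2 ≤ b * L ^ 2 := by
      have hRR : R₀ * R₀ ≤ R * r := mul_le_mul hR.1 hr.1 hR₀.le (hR₀.le.trans hR.1)
      have hRR2 : R₀ * R₀ ≤ R * R := mul_le_mul hR.1 hR.1 hR₀.le (hR₀.le.trans hR.1)
      have e : (R + r) ^ 2 - r ^ 2 = R * R + 2 * (R * r) := by ring
      have h6' : R * R + 2 * (R * r) - b * L ^ 2 < 0 := by linarith [h6, e]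
      have hsq : (3:ℝ) * R₀ ^ 2 = R₀ * R₀ + 2 * (R₀ * R₀) := by ring
      linarith [h6', hRR, hRR2, hsq]
    have hb1 : b ≤ 1 := by linarith
    have key : 3 * R₀ ^ 2 ≤ L ^ 2 :=
      h7.trans (mul_le_of_le_one_left (sq_nonneg L) hb1)
    calc Real.sqrt 3 * R₀ = Real.sqrt (3 * R₀ ^ 2) := by
          rw [Real.sqrt_mul (by norm_num) (R₀ ^ 2), Real.sqrt_sq hR₀.le]
      _ ≤ Real.sqrt (L ^ 2) := Real.sqrt_le_sqrt key
      _ = L := Real.sqrt_sq hL0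
  by_contra hcon
  push_neg at hcon
  obtain ⟨z, hz, hdz⟩ := (Metric.infDist_lt_iff hT'ne).mp hcon
  exact absurd hdz (not_lt.mpr (main z hz))
end

section
/- For every δ > 0 there exist ε > 0 and α > 0 with the following property: for all points x, y ∈ ℝ², every radius R ∈ [R₀, R₀ + ε] and every radius r ∈ [R₀, R₁], if the two-dimensional Lebesgue measure of B̄(x,R) ∩ B̄(y,r) is positive and at most α, then |d(x, B̄(y,r)) − R₀| ≤ δ, where d(x, B̄(y,r)) is the Euclidean infimum distance from x to the closed ball B̄(y,r). -/
open Metric Set MeasureTheory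

theorem stmt_8 (R₀ R₁ : ℝ) (hR₀ : 0 < R₀) (hR₀₁ : R₀ ≤ R₁)
    (δ : ℝ) (hδ : 0 < δ) :
    ∃ ε > (0 : ℝ), ∃ α > (0 : ℝ),
      ∀ (x y : EuclideanSpace ℝ (Fin 2)) (R r : ℝ),
        R ∈ Set.Icc R₀ (R₀ + ε) → r ∈ Set.Icc R₀ R₁ →
        0 < volume (Metric.closedBall x R ∩ Metric.closedBall y r) →
        volume (Metric.closedBall x R ∩ Metric.closedBall y r) ≤ ENNReal.ofReal α →
        |Metric.infDist x (Metric.closedBall y r) - R₀| ≤ δ := by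
  set E := EuclideanSpace ℝ (Fin 2)
  set c : ℝ := min δ R₀ with hc_def
  have hc : 0 < c := lt_min hδ hR₀
  have hcδ : c ≤ δ := min_le_left _ _
  have hcR₀ : c ≤ R₀ := min_le_right _ _
  have hvol_pos : 0 < volume (Metric.closedBall (0 : E) (c / 2)) :=
    lt_of_lt_of_le (measure_ball_pos _ _ (by positivity)) (measure_mono ball_subset_closedBall)
  have hvol_ne_top : volume (Metric.closedBall (0 : E) (c / 2)) ≠ ⊤ :=
    (measure_closedBall_lt_top).ne
  set α : ℝ := (volume (Metric.closedBall (0 : E) (c / 2))).toReal / 2 with hα_def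
  have hα : 0 < α := by
    have := ENNReal.toReal_pos hvol_pos.ne' hvol_ne_top
    positivity
  refine ⟨δ, hδ, α, hα, ?_⟩
  intro x y R r hR hr hpos hle
  obtain ⟨hR1, hR2⟩ := hR
  obtain ⟨hr1, hr2⟩ := hr
  set d := dist x y with hd_def
  -- positive volume of intersection gives a common point, hence d ≤ R + r
  have hdle : d ≤ R + r := by
    obtain ⟨z, hz1, hz2⟩ := nonempty_of_measure_ne_zero hpos.ne'
    calc d ≤ dist x z + dist z y := dist_triangle _ _ _
      _ ≤ R + r := add_le_add (by rw [dist_comm]; exact mem_closedBall.mp hz1)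
          (mem_closedBall.mp hz2)
  -- small volume forces d ≥ R + r - c
  have hdge : R + r - c ≤ d := by
    by_contra hlt
    push_neg at hlt
    -- find a small ball inside the intersection
    have key : ∃ p : E, Metric.closedBall p (c / 2) ⊆
        Metric.closedBall x R ∩ Metric.closedBall y r := by
      rcases le_or_gt d (R - c / 2) with hcase | hcase
      · refine ⟨y, fun z hz => ⟨?_, ?_⟩⟩
        · have hz' : dist z y ≤ c / 2 := mem_closedBall.mp hz
          rw [mem_closedBall]
          calc dist z x ≤ dist z y + dist y x := dist_triangle _ _ _
            _ ≤ c / 2 + d := by rw [dist_comm y x]; exact add_le_add hz' le_rfl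
            _ ≤ R := by linarith
        · exact Metric.closedBall_subset_closedBall (by linarith) hz
      · have hdpos : 0 < d := lt_of_le_of_lt (by linarith) hcase
        set t : ℝ := (R - c / 2) / d with ht_def
        have ht0 : 0 ≤ t := div_nonneg (by linarith) hdpos.le
        have ht1 : t ≤ 1 := (div_le_one hdpos).mpr hcase.le
        refine ⟨x + t • (y - x), fun z hz => ⟨?_, ?_⟩⟩
        · have hz' : dist z (x + t • (y - x)) ≤ c / 2 := mem_closedBall.mp hz
          have hpx : dist (x + t • (y - x)) x = R - c / 2 := by
            rw [dist_eq_norm]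
            have : x + t • (y - x) - x = t • (y - x) := by abel
            rw [this, norm_smul, Real.norm_eq_abs, abs_of_nonneg ht0, ← dist_eq_norm,
              dist_comm y x, ← hd_def, ht_def, div_mul_cancel₀ _ hdpos.ne']
          rw [mem_closedBall]
          calc dist z x ≤ dist z (x + t • (y - x)) + dist (x + t • (y - x)) x :=
              dist_triangle _ _ _
            _ ≤ c / 2 + (R - c / 2) := add_le_add hz' hpx.le
            _ = R := by ring
        · have hz' : dist z (x + t • (y - x)) ≤ c / 2 := mem_closedBall.mp hz
          have hpy : dist (x + t • (y - x)) y = d - (R - c / 2) := by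
            rw [dist_eq_norm]
            have : x + t • (y - x) - y = (1 - t) • (x - y) := by module
            rw [this, norm_smul, Real.norm_eq_abs, abs_of_nonneg (by linarith), ← dist_eq_norm,
              ← hd_def, ht_def]
            field_simp
          rw [mem_closedBall]
          calc dist z y ≤ dist z (x + t • (y - x)) + dist (x + t • (y - x)) y :=
              dist_triangle _ _ _
            _ ≤ c / 2 + (d - (R - c / 2)) := add_le_add hz' hpy.le
            _ ≤ r := by linarith
    obtain ⟨p, hp⟩ := key
    have hvol_eq : volume (Metric.closedBall p (c / 2)) =
        volume (Metric.closedBall (0 : E) (c / 2)) := by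
      rw [EuclideanSpace.volume_closedBall, EuclideanSpace.volume_closedBall]
    have hlt2 : ENNReal.ofReal α < volume (Metric.closedBall (0 : E) (c / 2)) := by
      rw [ENNReal.ofReal_lt_iff_lt_toReal hα.le hvol_ne_top]
      exact half_lt_self (ENNReal.toReal_pos hvol_pos.ne' hvol_ne_top)
    have : volume (Metric.closedBall (0 : E) (c / 2)) ≤ ENNReal.ofReal α := by
      rw [← hvol_eq]
      exact le_trans (measure_mono hp) hle
    exact absurd (lt_of_lt_of_le hlt2 this) (lt_irrefl _)
  -- compute the infimum distance: d ≥ r so infDist = d - r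
  have hdr : r ≤ d := by linarith
  have hdpos : 0 < d := lt_of_lt_of_le hR₀ (le_trans hr1 hdr)
  have hinf : Metric.infDist x (Metric.closedBall y r) = d - r := by
    apply le_antisymm
    · set w : E := y + (r / d) • (x - y) with hw_def
      have hw : w ∈ Metric.closedBall y r := by
        rw [mem_closedBall, dist_eq_norm]
        have : w - y = (r / d) • (x - y) := by rw [hw_def]; abel
        rw [this, norm_smul, Real.norm_eq_abs,
          abs_of_nonneg (div_nonneg (by linarith) hdpos.le), ← dist_eq_norm, ← hd_def,
          div_mul_cancel₀ _ hdpos.ne']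
      have hxw : dist x w = d - r := by
        rw [dist_eq_norm]
        have : x - w = (1 - r / d) • (x - y) := by
          rw [hw_def, sub_smul, one_smul]
          abel
        rw [this, norm_smul, Real.norm_eq_abs,
          abs_of_nonneg (by rw [sub_nonneg]; exact (div_le_one hdpos).mpr hdr),
          ← dist_eq_norm, ← hd_def]
        field_simp
      calc Metric.infDist x (Metric.closedBall y r) ≤ dist x w := Metric.infDist_le_dist_of_mem hw
        _ = d - r := hxw
    · by_contra h
      push_neg at h
      obtain ⟨z, hz, hzlt⟩ := (Metric.infDist_lt_iff
        (Metric.nonempty_closedBall.mpr (by linarith : (0:ℝ) ≤ r))).mp h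
      have hz' : dist z y ≤ r := mem_closedBall.mp hz
      have h3 := dist_triangle x z y
      linarith
  rw [hinf, abs_le]
  constructor <;> linarith
end

section
/- Let ω be a configuration and let C₁ be a connected component of ω̄. Suppose (x₁, r₁) ∈ ω with B̄(x₁, r₁) ⊆ C₁, and (x₂, r₂) ∈ ω with B̄(x₂, r₂) ∩ C₁ = ∅. Then there exists a point x on the line segment [x₁, x₂] such that d(x, C₁) = d(x, ω̄ ∖ C₁) > 0; consequently, |x − y| > R ≥ R₀ for every (y,R) ∈ ω, so the open ball B(x, R₀) contains no germ of ω. -/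
open Metric Set

theorem stmt_12 (R₀ R₁ : ℝ) (hR₀ : 0 < R₀) (hR₀₁ : R₀ ≤ R₁)
    (ω : Finset (EuclideanSpace ℝ (Fin 2) × ℝ))
    (hω : ∀ p ∈ ω, p.2 ∈ Set.Icc R₀ R₁)
    (C₁ : Set (EuclideanSpace ℝ (Fin 2))) (hC₁ : IsCompOf C₁ (surface ω))
    (x₁ x₂ : EuclideanSpace ℝ (Fin 2)) (r₁ r₂ : ℝ)
    (hx₁ : (x₁, r₁) ∈ ω) (hb₁ : Metric.closedBall x₁ r₁ ⊆ C₁)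
    (hx₂ : (x₂, r₂) ∈ ω) (hb₂ : Disjoint (Metric.closedBall x₂ r₂) C₁) :
    ∃ x ∈ segment ℝ x₁ x₂,
      Metric.infDist x C₁ = Metric.infDist x (surface ω \ C₁) ∧
      0 < Metric.infDist x C₁ ∧
      (∀ p ∈ ω, p.2 < dist x p.1) ∧
      (∀ p ∈ ω, p.1 ∉ Metric.ball x R₀) := by
  obtain ⟨x₀, hx₀S, hC₁eq⟩ := hC₁
  set S := surface ω with hSdef
  set B := S \ C₁ with hBdef
  have hSclosed : IsClosed S := by
    refine Set.Finite.isClosed_biUnion ω.finite_toSet fun p _ => isClosed_closedBall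
  -- dichotomy for each ball
  have hdich : ∀ p ∈ ω, Metric.closedBall p.1 p.2 ⊆ C₁ ∨
      Disjoint (Metric.closedBall p.1 p.2) C₁ := by
    intro p hp
    by_cases h : Disjoint (Metric.closedBall p.1 p.2) C₁
    · exact Or.inr h
    · left
      rw [Set.not_disjoint_iff] at h
      obtain ⟨z, hz1, hz2⟩ := h
      have hsub : Metric.closedBall p.1 p.2 ⊆ S := fun w hw => Set.mem_biUnion hp hw
      have hzc : z ∈ connectedComponentIn S x₀ := hC₁eq ▸ hz2
      have hball := (convex_closedBall p.1 p.2).isPreconnected.subset_connectedComponentIn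
        hz1 hsub
      rw [hC₁eq, connectedComponentIn_eq hzc]
      exact hball
  have hAclosed : IsClosed C₁ := by
    rw [hC₁eq, connectedComponentIn_eq_image hx₀S]
    exact hSclosed.isClosedEmbedding_subtypeVal.isClosedMap _ isClosed_connectedComponent
  -- B is a finite union of closed balls
  have hBeq : B = ⋃ p ∈ {p : EuclideanSpace ℝ (Fin 2) × ℝ | p ∈ ω ∧ Disjoint (Metric.closedBall p.1 p.2) C₁},
      Metric.closedBall p.1 p.2 := by
    ext w
    constructor
    · rintro ⟨hwS, hwC⟩
      obtain ⟨p, hp, hwp⟩ : ∃ p ∈ ω, w ∈ Metric.closedBall p.1 p.2 := by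
        simpa [hSdef, surface] using hwS
      rcases hdich p hp with hsub | hdisj
      · exact absurd (hsub hwp) hwC
      · exact Set.mem_biUnion ⟨hp, hdisj⟩ hwp
    · intro hw
      simp only [Set.mem_iUnion, Set.mem_setOf_eq] at hw
      obtain ⟨p, ⟨hp, hdisj⟩, hwp⟩ := hw
      exact ⟨Set.mem_biUnion hp hwp, fun hwC => hdisj.ne_of_mem hwp hwC rfl⟩
  have hBclosed : IsClosed B := by
    rw [hBeq]
    exact Set.Finite.isClosed_biUnion (ω.finite_toSet.subset (fun p hp => hp.1))
      fun p _ => isClosed_closedBall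
  have hr₁ : (0:ℝ) ≤ r₁ := le_trans hR₀.le (hω _ hx₁).1
  have hr₂ : (0:ℝ) ≤ r₂ := le_trans hR₀.le (hω _ hx₂).1
  have hx₁A : x₁ ∈ C₁ := hb₁ (Metric.mem_closedBall_self hr₁)
  have hx₂S : x₂ ∈ S := Set.mem_biUnion hx₂ (Metric.mem_closedBall_self hr₂)
  have hx₂B : x₂ ∈ B := ⟨hx₂S, fun h => hb₂.ne_of_mem (Metric.mem_closedBall_self hr₂) h rfl⟩
  have hAne : C₁.Nonempty := ⟨x₁, hx₁A⟩
  have hBne : B.Nonempty := ⟨x₂, hx₂B⟩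
  have hAB : Disjoint C₁ B := Set.disjoint_sdiff_right.mono_left le_rfl
  -- IVT along the segment
  set g : ℝ → ℝ := fun t =>
    Metric.infDist (AffineMap.lineMap x₁ x₂ t) C₁ -
      Metric.infDist (AffineMap.lineMap x₁ x₂ t) B with hg
  have hgc : Continuous g := by
    apply Continuous.sub
    · exact (continuous_infDist_pt C₁).comp AffineMap.lineMap_continuous
    · exact (continuous_infDist_pt B).comp AffineMap.lineMap_continuous
  have hg0 : g 0 ≤ 0 := by
    simp only [hg, AffineMap.lineMap_apply_zero]
    have : Metric.infDist x₁ C₁ = 0 := by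
      rw [← hAclosed.closure_eq] at hx₁A
      exact Metric.infDist_zero_of_mem (hAclosed.closure_eq ▸ hx₁A)
    rw [this]
    simpa using Metric.infDist_nonneg
  have hg1 : 0 ≤ g 1 := by
    simp only [hg, AffineMap.lineMap_apply_one]
    have : Metric.infDist x₂ B = 0 := Metric.infDist_zero_of_mem hx₂B
    rw [this]
    simpa using Metric.infDist_nonneg
  have hIVT : (0:ℝ) ∈ g '' Set.Icc 0 1 :=
    intermediate_value_Icc zero_le_one hgc.continuousOn ⟨hg0, hg1⟩
  obtain ⟨t, ht, hgt⟩ := hIVT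
  refine ⟨AffineMap.lineMap x₁ x₂ t, ?_, ?_⟩
  · rw [segment_eq_image_lineMap]
    exact Set.mem_image_of_mem _ ht
  set x := AffineMap.lineMap x₁ x₂ t with hx
  have heq : Metric.infDist x C₁ = Metric.infDist x B := by
    have : Metric.infDist x C₁ - Metric.infDist x B = 0 := hgt
    linarith
  have hpos : 0 < Metric.infDist x C₁ := by
    rcases lt_or_eq_of_le (Metric.infDist_nonneg (x := x) (s := C₁)) with h | h
    · exact h
    · exfalso
      have hxA : x ∈ C₁ := (hAclosed.mem_iff_infDist_zero hAne).mpr h.symm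
      have hxB : x ∈ B := (hBclosed.mem_iff_infDist_zero hBne).mpr (heq ▸ h.symm)
      exact hAB.ne_of_mem hxA hxB rfl
  have hfar : ∀ p ∈ ω, p.2 < dist x p.1 := by
    intro p hp
    by_contra h
    push_neg at h
    have hxball : x ∈ Metric.closedBall p.1 p.2 := Metric.mem_closedBall.mpr h
    rcases hdich p hp with hsub | hdisj
    · have : Metric.infDist x C₁ = 0 := Metric.infDist_zero_of_mem (hsub hxball)
      linarith
    · have hxB : x ∈ B := ⟨Set.mem_biUnion hp hxball,
        fun hC => hdisj.ne_of_mem hxball hC rfl⟩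
      have : Metric.infDist x B = 0 := Metric.infDist_zero_of_mem hxB
      rw [heq] at hpos
      linarith
  refine ⟨heq, hpos, hfar, ?_⟩
  intro p hp
  rw [Metric.mem_ball]
  have h1 := hfar p hp
  have h2 := (hω p hp).1
  rw [dist_comm]
  linarith
end

section
/- Let ℓ > 2R₁ + 2R₀ and let ω be a locally finite configuration. For x ∈ V = (6ℓℤ)², let ξ_x(ω) = 1 if and only if both: (C1) each of the four translated cardinal boxes x+B_N, x+B_S, x+B_E, x+B_W contains at least one germ of ω lying in x+Δ; and (C2) exactly one connected component of ω̄_{x+Δ} (the union of the balls of ω with germ in x+Δ) contains a ball of ω centered in one of the four boxes x+B_N, x+B_S, x+B_E, x+B_W. Equip V with the graph structure in which x and y are adjacent if and only if y − x ∈ {±(6ℓ,0), ±(0,6ℓ)}. If the set {x ∈ V : ξ_x(ω) = 1} contains an infinite connected subset of this graph (i.e. percolation occurs in the site process {ξ_x}), then the germ-grain surface ω̄ contains an unbounded connected component. -/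
open Metric Set

/-- The point of the Euclidean plane with coordinates `(a, b)`. -/
def pt (a b : ℝ) : EuclideanSpace ℝ (Fin 2) := !₂[a, b]

/-- The germ-grain surface of a (possibly infinite) configuration. -/
def surfaceS (ω : Set (EuclideanSpace ℝ (Fin 2) × ℝ)) : Set (EuclideanSpace ℝ (Fin 2)) :=
  ⋃ p ∈ ω, Metric.closedBall p.1 p.2

/-- The germ-grain surface restricted to germs lying in `A`. -/
def surfaceInS (ω : Set (EuclideanSpace ℝ (Fin 2) × ℝ)) (A : Set (EuclideanSpace ℝ (Fin 2))) :
    Set (EuclideanSpace ℝ (Fin 2)) :=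
  {z | ∃ p ∈ ω, p.1 ∈ A ∧ z ∈ Metric.closedBall p.1 p.2}

/-- The diamond box `Δ`: the interior of the convex hull of the eight given points. -/
def diamond (ℓ : ℝ) : Set (EuclideanSpace ℝ (Fin 2)) :=
  interior (convexHull ℝ
    {pt (3 * ℓ) 0, pt (6 * ℓ) 0, pt (9 * ℓ) (3 * ℓ), pt (9 * ℓ) (6 * ℓ),
     pt (6 * ℓ) (9 * ℓ), pt (3 * ℓ) (9 * ℓ), pt 0 (6 * ℓ), pt 0 (3 * ℓ)})

/-- The axis-parallel square `(a,b) + [0,ℓ]²`. -/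
def box (a b ℓ : ℝ) : Set (EuclideanSpace ℝ (Fin 2)) :=
  {z | z 0 ∈ Set.Icc a (a + ℓ) ∧ z 1 ∈ Set.Icc b (b + ℓ)}

/-- The union of the four cardinal boxes `B_N ∪ B_S ∪ B_E ∪ B_W`. -/
def cardinalBoxes (ℓ : ℝ) : Set (EuclideanSpace ℝ (Fin 2)) :=
  box (4 * ℓ) (7 * ℓ) ℓ ∪ box (4 * ℓ) ℓ ℓ ∪ box (7 * ℓ) (4 * ℓ) ℓ ∪ box ℓ (4 * ℓ) ℓ

/-- Translate a set by a vector. -/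
def translateSet (x : EuclideanSpace ℝ (Fin 2)) (A : Set (EuclideanSpace ℝ (Fin 2))) :
    Set (EuclideanSpace ℝ (Fin 2)) :=
  (fun z => x + z) '' A

/-- The site variable `ξ_x` of the discretized process: condition (C1) and (C2)
in the translated diamond box `x + Δ`. -/
def xi (ℓ : ℝ) (ω : Set (EuclideanSpace ℝ (Fin 2) × ℝ)) (v : ℤ × ℤ) : Prop :=
  let x : EuclideanSpace ℝ (Fin 2) := pt (6 * ℓ * (v.1 : ℝ)) (6 * ℓ * (v.2 : ℝ))
  -- (C1): each translated cardinal box contains a germ of `ω` lying in `x + Δ`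
  ((∃ p ∈ ω, p.1 ∈ translateSet x (diamond ℓ) ∧ p.1 ∈ translateSet x (box (4 * ℓ) (7 * ℓ) ℓ)) ∧
   (∃ p ∈ ω, p.1 ∈ translateSet x (diamond ℓ) ∧ p.1 ∈ translateSet x (box (4 * ℓ) ℓ ℓ)) ∧
   (∃ p ∈ ω, p.1 ∈ translateSet x (diamond ℓ) ∧ p.1 ∈ translateSet x (box (7 * ℓ) (4 * ℓ) ℓ)) ∧
   (∃ p ∈ ω, p.1 ∈ translateSet x (diamond ℓ) ∧ p.1 ∈ translateSet x (box ℓ (4 * ℓ) ℓ))) ∧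
  -- (C2): exactly one connected component of `ω̄_{x+Δ}` contains a ball of `ω`
  -- centered in one of the four translated cardinal boxes
  (∃! C : Set (EuclideanSpace ℝ (Fin 2)),
    (∃ z ∈ surfaceInS ω (translateSet x (diamond ℓ)),
      C = connectedComponentIn (surfaceInS ω (translateSet x (diamond ℓ))) z) ∧
    ∃ q ∈ ω, q.1 ∈ translateSet x (diamond ℓ) ∧ q.1 ∈ translateSet x (cardinalBoxes ℓ) ∧
      Metric.closedBall q.1 q.2 ⊆ C)

/-- Adjacency of the square lattice `ℤ²` (which represents `(6ℓℤ)²`). -/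
def adjZ (a b : ℤ × ℤ) : Prop :=
  (b.1 = a.1 + 1 ∧ b.2 = a.2) ∨ (b.1 = a.1 - 1 ∧ b.2 = a.2) ∨
  (b.1 = a.1 ∧ b.2 = a.2 + 1) ∨ (b.1 = a.1 ∧ b.2 = a.2 - 1)


/-! ### Auxiliary lemmas -/

lemma coord_dist_le (w z : EuclideanSpace ℝ (Fin 2)) (i : Fin 2) :
    dist (w i) (z i) ≤ dist w z := by
  rw [EuclideanSpace.dist_eq]
  rw [show dist (w i) (z i) = Real.sqrt (dist (w i) (z i) ^ 2) from (Real.sqrt_sq dist_nonneg).symm]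
  exact Real.sqrt_le_sqrt (Finset.single_le_sum (f := fun j => dist (w j) (z j) ^ 2)
    (fun j _ => sq_nonneg _) (Finset.mem_univ i))

lemma coord_norm_le (z : EuclideanSpace ℝ (Fin 2)) (i : Fin 2) : |z i| ≤ ‖z‖ := by
  have := coord_dist_le z 0 i
  simpa [Real.dist_eq] using this

lemma band_subset_hull {ℓ : ℝ} (hℓ : 0 < ℓ) {z : EuclideanSpace ℝ (Fin 2)}
    (h0 : 0 ≤ z 0) (h0' : z 0 ≤ 9 * ℓ) (h1 : 3 * ℓ ≤ z 1) (h1' : z 1 ≤ 6 * ℓ) :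
    z ∈ convexHull ℝ
      ({pt (3 * ℓ) 0, pt (6 * ℓ) 0, pt (9 * ℓ) (3 * ℓ), pt (9 * ℓ) (6 * ℓ),
        pt (6 * ℓ) (9 * ℓ), pt (3 * ℓ) (9 * ℓ), pt 0 (6 * ℓ), pt 0 (3 * ℓ)} :
        Set (EuclideanSpace ℝ (Fin 2))) := by
  set K := convexHull ℝ
      ({pt (3 * ℓ) 0, pt (6 * ℓ) 0, pt (9 * ℓ) (3 * ℓ), pt (9 * ℓ) (6 * ℓ),
        pt (6 * ℓ) (9 * ℓ), pt (3 * ℓ) (9 * ℓ), pt 0 (6 * ℓ), pt 0 (3 * ℓ)} :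
        Set (EuclideanSpace ℝ (Fin 2))) with hKdef
  have hK : Convex ℝ K := convex_convexHull ℝ _
  have hL1 : pt 0 (3 * ℓ) ∈ K := subset_convexHull ℝ _ (by simp)
  have hL2 : pt 0 (6 * ℓ) ∈ K := subset_convexHull ℝ _ (by simp)
  have hR1 : pt (9 * ℓ) (3 * ℓ) ∈ K := subset_convexHull ℝ _ (by simp)
  have hR2 : pt (9 * ℓ) (6 * ℓ) ∈ K := subset_convexHull ℝ _ (by simp)
  have h3 : (0:ℝ) < 3 * ℓ := by linarith
  have h9 : (0:ℝ) < 9 * ℓ := by linarith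
  set t : ℝ := (z 1 - 3 * ℓ) / (3 * ℓ) with htdef
  set s : ℝ := z 0 / (9 * ℓ) with hsdef
  have ht0 : 0 ≤ t := div_nonneg (by linarith) h3.le
  have ht1 : t ≤ 1 := by rw [htdef, div_le_one h3]; linarith
  have hs0 : 0 ≤ s := div_nonneg h0 h9.le
  have hs1 : s ≤ 1 := by rw [hsdef, div_le_one h9]; linarith
  have hL : (1 - t) • pt 0 (3 * ℓ) + t • pt 0 (6 * ℓ) ∈ K :=
    hK hL1 hL2 (by linarith) ht0 (by ring)
  have hR : (1 - t) • pt (9 * ℓ) (3 * ℓ) + t • pt (9 * ℓ) (6 * ℓ) ∈ K :=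
    hK hR1 hR2 (by linarith) ht0 (by ring)
  have hz : z = (1 - s) • ((1 - t) • pt 0 (3 * ℓ) + t • pt 0 (6 * ℓ))
      + s • ((1 - t) • pt (9 * ℓ) (3 * ℓ) + t • pt (9 * ℓ) (6 * ℓ)) := by
    have e0 : s * (9 * ℓ) = z 0 := by rw [hsdef]; exact div_mul_cancel₀ _ h9.ne'
    have e1 : t * (3 * ℓ) = z 1 - 3 * ℓ := by rw [htdef]; exact div_mul_cancel₀ _ h3.ne'
    ext i
    fin_cases i <;>
      simp only [Fin.mk_zero, Fin.mk_one, PiLp.add_apply, PiLp.smul_apply, pt, smul_eq_mul,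
        Matrix.cons_val_zero, Matrix.cons_val_one, Matrix.head_cons]
    · linear_combination -e0
    · linear_combination -e1
  rw [hz]
  exact hK hL hR (by linarith) hs0 (by ring)

lemma vband_subset_hull {ℓ : ℝ} (hℓ : 0 < ℓ) {z : EuclideanSpace ℝ (Fin 2)}
    (h0 : 3 * ℓ ≤ z 0) (h0' : z 0 ≤ 6 * ℓ) (h1 : 0 ≤ z 1) (h1' : z 1 ≤ 9 * ℓ) :
    z ∈ convexHull ℝ
      ({pt (3 * ℓ) 0, pt (6 * ℓ) 0, pt (9 * ℓ) (3 * ℓ), pt (9 * ℓ) (6 * ℓ),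
        pt (6 * ℓ) (9 * ℓ), pt (3 * ℓ) (9 * ℓ), pt 0 (6 * ℓ), pt 0 (3 * ℓ)} :
        Set (EuclideanSpace ℝ (Fin 2))) := by
  set K := convexHull ℝ
      ({pt (3 * ℓ) 0, pt (6 * ℓ) 0, pt (9 * ℓ) (3 * ℓ), pt (9 * ℓ) (6 * ℓ),
        pt (6 * ℓ) (9 * ℓ), pt (3 * ℓ) (9 * ℓ), pt 0 (6 * ℓ), pt 0 (3 * ℓ)} :
        Set (EuclideanSpace ℝ (Fin 2))) with hKdef
  have hK : Convex ℝ K := convex_convexHull ℝ _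
  have hL1 : pt (3 * ℓ) 0 ∈ K := subset_convexHull ℝ _ (by simp)
  have hL2 : pt (6 * ℓ) 0 ∈ K := subset_convexHull ℝ _ (by simp)
  have hR1 : pt (3 * ℓ) (9 * ℓ) ∈ K := subset_convexHull ℝ _ (by simp)
  have hR2 : pt (6 * ℓ) (9 * ℓ) ∈ K := subset_convexHull ℝ _ (by simp)
  have h3 : (0:ℝ) < 3 * ℓ := by linarith
  have h9 : (0:ℝ) < 9 * ℓ := by linarith
  set t : ℝ := (z 0 - 3 * ℓ) / (3 * ℓ) with htdef
  set s : ℝ := z 1 / (9 * ℓ) with hsdef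
  have ht0 : 0 ≤ t := div_nonneg (by linarith) h3.le
  have ht1 : t ≤ 1 := by rw [htdef, div_le_one h3]; linarith
  have hs0 : 0 ≤ s := div_nonneg h1 h9.le
  have hs1 : s ≤ 1 := by rw [hsdef, div_le_one h9]; linarith
  have hL : (1 - t) • pt (3 * ℓ) 0 + t • pt (6 * ℓ) 0 ∈ K :=
    hK hL1 hL2 (by linarith) ht0 (by ring)
  have hR : (1 - t) • pt (3 * ℓ) (9 * ℓ) + t • pt (6 * ℓ) (9 * ℓ) ∈ K :=
    hK hR1 hR2 (by linarith) ht0 (by ring)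
  have hz : z = (1 - s) • ((1 - t) • pt (3 * ℓ) 0 + t • pt (6 * ℓ) 0)
      + s • ((1 - t) • pt (3 * ℓ) (9 * ℓ) + t • pt (6 * ℓ) (9 * ℓ)) := by
    have e0 : s * (9 * ℓ) = z 1 := by rw [hsdef]; exact div_mul_cancel₀ _ h9.ne'
    have e1 : t * (3 * ℓ) = z 0 - 3 * ℓ := by rw [htdef]; exact div_mul_cancel₀ _ h3.ne'
    ext i
    fin_cases i <;>
      simp only [Fin.mk_zero, Fin.mk_one, PiLp.add_apply, PiLp.smul_apply, pt, smul_eq_mul,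
        Matrix.cons_val_zero, Matrix.cons_val_one, Matrix.head_cons]
    · linear_combination -e1
    · linear_combination -e0
  rw [hz]
  exact hK hL hR (by linarith) hs0 (by ring)

lemma box_subset_diamond_of_band {ℓ a b : ℝ} (hℓ : 0 < ℓ)
    (h : (ℓ/2 ≤ a ∧ a + ℓ + ℓ/2 ≤ 9*ℓ ∧ 3*ℓ + ℓ/2 ≤ b ∧ b + ℓ + ℓ/2 ≤ 6*ℓ) ∨
         (3*ℓ + ℓ/2 ≤ a ∧ a + ℓ + ℓ/2 ≤ 6*ℓ ∧ ℓ/2 ≤ b ∧ b + ℓ + ℓ/2 ≤ 9*ℓ)) :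
    box a b ℓ ⊆ diamond ℓ := by
  intro z hz
  obtain ⟨hz0, hz1⟩ := hz
  rw [Set.mem_Icc] at hz0 hz1
  show z ∈ interior _
  refine mem_interior.mpr ⟨Metric.ball z (ℓ/2), fun w hw => ?_, Metric.isOpen_ball,
    Metric.mem_ball_self (by linarith)⟩
  have d0 := lt_of_le_of_lt (coord_dist_le w z 0) (Metric.mem_ball.mp hw)
  have d1 := lt_of_le_of_lt (coord_dist_le w z 1) (Metric.mem_ball.mp hw)
  rw [Real.dist_eq, abs_lt] at d0 d1
  rcases h with ⟨ha1, ha2, hb1, hb2⟩ | ⟨ha1, ha2, hb1, hb2⟩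
  · exact band_subset_hull hℓ (by linarith [hz0.1, d0.1]) (by linarith [hz0.2, d0.2])
      (by linarith [hz1.1, d1.1]) (by linarith [hz1.2, d1.2])
  · exact vband_subset_hull hℓ (by linarith [hz0.1, d0.1]) (by linarith [hz0.2, d0.2])
      (by linarith [hz1.1, d1.1]) (by linarith [hz1.2, d1.2])

lemma boxN_subset_diamond {ℓ : ℝ} (hℓ : 0 < ℓ) : box (4*ℓ) (7*ℓ) ℓ ⊆ diamond ℓ :=
  box_subset_diamond_of_band hℓ (Or.inr ⟨by linarith, by linarith, by linarith, by linarith⟩)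

lemma boxS_subset_diamond {ℓ : ℝ} (hℓ : 0 < ℓ) : box (4*ℓ) ℓ ℓ ⊆ diamond ℓ :=
  box_subset_diamond_of_band hℓ (Or.inr ⟨by linarith, by linarith, by linarith, by linarith⟩)

lemma boxE_subset_diamond {ℓ : ℝ} (hℓ : 0 < ℓ) : box (7*ℓ) (4*ℓ) ℓ ⊆ diamond ℓ :=
  box_subset_diamond_of_band hℓ (Or.inl ⟨by linarith, by linarith, by linarith, by linarith⟩)

lemma boxW_subset_diamond {ℓ : ℝ} (hℓ : 0 < ℓ) : box ℓ (4*ℓ) ℓ ⊆ diamond ℓ :=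
  box_subset_diamond_of_band hℓ (Or.inl ⟨by linarith, by linarith, by linarith, by linarith⟩)

lemma boxN_subset_cb {ℓ : ℝ} : box (4*ℓ) (7*ℓ) ℓ ⊆ cardinalBoxes ℓ :=
  (Set.subset_union_left.trans Set.subset_union_left).trans Set.subset_union_left

lemma boxS_subset_cb {ℓ : ℝ} : box (4*ℓ) ℓ ℓ ⊆ cardinalBoxes ℓ :=
  (Set.subset_union_right.trans Set.subset_union_left).trans Set.subset_union_left

lemma boxE_subset_cb {ℓ : ℝ} : box (7*ℓ) (4*ℓ) ℓ ⊆ cardinalBoxes ℓ :=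
  Set.subset_union_right.trans Set.subset_union_left

lemma boxW_subset_cb {ℓ : ℝ} : box ℓ (4*ℓ) ℓ ⊆ cardinalBoxes ℓ :=
  Set.subset_union_right

lemma mem_translateSet_box {X Y a b l : ℝ} {z : EuclideanSpace ℝ (Fin 2)} :
    z ∈ translateSet (pt X Y) (box a b l) ↔
      (X + a ≤ z 0 ∧ z 0 ≤ X + a + l) ∧ (Y + b ≤ z 1 ∧ z 1 ≤ Y + b + l) := by
  constructor
  · rintro ⟨w, ⟨h01, h11⟩, rfl⟩
    rw [Set.mem_Icc] at h01 h11
    show (X + a ≤ (pt X Y + w) 0 ∧ (pt X Y + w) 0 ≤ X + a + l) ∧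
      (Y + b ≤ (pt X Y + w) 1 ∧ (pt X Y + w) 1 ≤ Y + b + l)
    have e0 : (pt X Y + w) 0 = X + w 0 := by simp [pt]
    have e1 : (pt X Y + w) 1 = Y + w 1 := by simp [pt]
    rw [e0, e1]
    exact ⟨⟨by linarith [h01.1], by linarith [h01.2]⟩, by linarith [h11.1], by linarith [h11.2]⟩
  · rintro ⟨⟨h1, h2⟩, h3, h4⟩
    refine ⟨z - pt X Y, ⟨?_, ?_⟩, add_sub_cancel (pt X Y) z⟩
    · have e0 : (z - pt X Y) 0 = z 0 - X := by simp [pt]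
      rw [e0, Set.mem_Icc]; exact ⟨by linarith, by linarith⟩
    · have e1 : (z - pt X Y) 1 = z 1 - Y := by simp [pt]
      rw [e1, Set.mem_Icc]; exact ⟨by linarith, by linarith⟩

/-- The lattice point of a site. -/
def sPt (ℓ : ℝ) (v : ℤ × ℤ) : EuclideanSpace ℝ (Fin 2) :=
  pt (6 * ℓ * (v.1 : ℝ)) (6 * ℓ * (v.2 : ℝ))

/-- The translated diamond of a site. -/
def sD (ℓ : ℝ) (v : ℤ × ℤ) : Set (EuclideanSpace ℝ (Fin 2)) :=
  translateSet (sPt ℓ v) (diamond ℓ)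

/-- The translated cardinal boxes of a site. -/
def sCB (ℓ : ℝ) (v : ℤ × ℤ) : Set (EuclideanSpace ℝ (Fin 2)) :=
  translateSet (sPt ℓ v) (cardinalBoxes ℓ)

/-- The local germ-grain surface of a site. -/
def sSurf (ℓ : ℝ) (ω : Set (EuclideanSpace ℝ (Fin 2) × ℝ)) (v : ℤ × ℤ) :
    Set (EuclideanSpace ℝ (Fin 2)) :=
  surfaceInS ω (sD ℓ v)

lemma xi_def {ℓ : ℝ} {ω : Set (EuclideanSpace ℝ (Fin 2) × ℝ)} {v : ℤ × ℤ} : xi ℓ ω v ↔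
    ((∃ p ∈ ω, p.1 ∈ sD ℓ v ∧ p.1 ∈ translateSet (sPt ℓ v) (box (4 * ℓ) (7 * ℓ) ℓ)) ∧
     (∃ p ∈ ω, p.1 ∈ sD ℓ v ∧ p.1 ∈ translateSet (sPt ℓ v) (box (4 * ℓ) ℓ ℓ)) ∧
     (∃ p ∈ ω, p.1 ∈ sD ℓ v ∧ p.1 ∈ translateSet (sPt ℓ v) (box (7 * ℓ) (4 * ℓ) ℓ)) ∧
     (∃ p ∈ ω, p.1 ∈ sD ℓ v ∧ p.1 ∈ translateSet (sPt ℓ v) (box ℓ (4 * ℓ) ℓ))) ∧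
    (∃! C : Set (EuclideanSpace ℝ (Fin 2)),
      (∃ z ∈ sSurf ℓ ω v, C = connectedComponentIn (sSurf ℓ ω v) z) ∧
      ∃ q ∈ ω, q.1 ∈ sD ℓ v ∧ q.1 ∈ sCB ℓ v ∧ Metric.closedBall q.1 q.2 ⊆ C) :=
  Iff.rfl

lemma surfaceInS_subset_surfaceS (ω : Set (EuclideanSpace ℝ (Fin 2) × ℝ))
    (A : Set (EuclideanSpace ℝ (Fin 2))) : surfaceInS ω A ⊆ surfaceS ω := by
  rintro z ⟨p, hp, _, hz⟩
  exact Set.mem_biUnion hp hz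

lemma comp_eq_of_card {ℓ : ℝ} {ω : Set (EuclideanSpace ℝ (Fin 2) × ℝ)}
    (hpos : ∀ p ∈ ω, 0 < p.2) {v : ℤ × ℤ} (hv : xi ℓ ω v)
    {q q' : EuclideanSpace ℝ (Fin 2) × ℝ} (hq : q ∈ ω) (hq' : q' ∈ ω)
    (hqD : q.1 ∈ sD ℓ v) (hqB : q.1 ∈ sCB ℓ v)
    (hq'D : q'.1 ∈ sD ℓ v) (hq'B : q'.1 ∈ sCB ℓ v) :
    connectedComponentIn (sSurf ℓ ω v) q.1 = connectedComponentIn (sSurf ℓ ω v) q'.1 := by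
  rw [xi_def] at hv
  obtain ⟨-, C, hC, huniq⟩ := hv
  have key : ∀ r ∈ ω, r.1 ∈ sD ℓ v → r.1 ∈ sCB ℓ v →
      connectedComponentIn (sSurf ℓ ω v) r.1 = C := by
    intro r hr hrD hrB
    have hr1 : r.1 ∈ sSurf ℓ ω v := ⟨r, hr, hrD, Metric.mem_closedBall_self (hpos r hr).le⟩
    refine huniq _ ⟨⟨r.1, hr1, rfl⟩, r, hr, hrD, hrB, ?_⟩
    exact (convex_closedBall _ _).isPreconnected.subset_connectedComponentIn
      (Metric.mem_closedBall_self (hpos r hr).le) (fun z hz => ⟨r, hr, hrD, hz⟩)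
  rw [key q hq hqD hqB, key q' hq' hq'D hq'B]

lemma shared_germ {ℓ : ℝ} (hℓ : 0 < ℓ) {ω : Set (EuclideanSpace ℝ (Fin 2) × ℝ)}
    {u v : ℤ × ℤ} (hadj : adjZ u v) (hu : xi ℓ ω u) :
    ∃ p ∈ ω, (p.1 ∈ sD ℓ u ∧ p.1 ∈ sCB ℓ u) ∧ (p.1 ∈ sD ℓ v ∧ p.1 ∈ sCB ℓ v) := by
  rw [xi_def] at hu
  obtain ⟨⟨hN, hS, hE, hW⟩, -⟩ := hu
  have transfer : ∀ (a b a' b' : ℝ) (z : EuclideanSpace ℝ (Fin 2)),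
      a + 6 * ℓ * (u.1:ℝ) = a' + 6 * ℓ * (v.1:ℝ) →
      b + 6 * ℓ * (u.2:ℝ) = b' + 6 * ℓ * (v.2:ℝ) →
      z ∈ translateSet (sPt ℓ u) (box a b ℓ) → z ∈ translateSet (sPt ℓ v) (box a' b' ℓ) := by
    intro a b a' b' z ha hb hz
    rw [sPt, mem_translateSet_box] at hz ⊢
    obtain ⟨⟨h1, h2⟩, h3, h4⟩ := hz
    exact ⟨⟨by linarith, by linarith⟩, by linarith, by linarith⟩
  rcases hadj with ⟨hv1, hv2⟩ | ⟨hv1, hv2⟩ | ⟨hv1, hv2⟩ | ⟨hv1, hv2⟩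
  · -- v = u + (1,0) : E box of u = W box of v
    obtain ⟨p, hp, hpD, hpB⟩ := hE
    have hpB' : p.1 ∈ translateSet (sPt ℓ v) (box ℓ (4*ℓ) ℓ) :=
      transfer _ _ _ _ _ (by rw [hv1]; push_cast; ring) (by rw [hv2]) hpB
    exact ⟨p, hp, ⟨hpD, Set.image_mono boxE_subset_cb hpB⟩,
      Set.image_mono (boxW_subset_diamond hℓ) hpB', Set.image_mono boxW_subset_cb hpB'⟩
  · -- v = u - (1,0) : W box of u = E box of v
    obtain ⟨p, hp, hpD, hpB⟩ := hW
    have hpB' : p.1 ∈ translateSet (sPt ℓ v) (box (7*ℓ) (4*ℓ) ℓ) :=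
      transfer _ _ _ _ _ (by rw [hv1]; push_cast; ring) (by rw [hv2]) hpB
    exact ⟨p, hp, ⟨hpD, Set.image_mono boxW_subset_cb hpB⟩,
      Set.image_mono (boxE_subset_diamond hℓ) hpB', Set.image_mono boxE_subset_cb hpB'⟩
  · -- v = u + (0,1) : N box of u = S box of v
    obtain ⟨p, hp, hpD, hpB⟩ := hN
    have hpB' : p.1 ∈ translateSet (sPt ℓ v) (box (4*ℓ) ℓ ℓ) :=
      transfer _ _ _ _ _ (by rw [hv1]) (by rw [hv2]; push_cast; ring) hpB
    exact ⟨p, hp, ⟨hpD, Set.image_mono boxN_subset_cb hpB⟩,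
      Set.image_mono (boxS_subset_diamond hℓ) hpB', Set.image_mono boxS_subset_cb hpB'⟩
  · -- v = u - (0,1) : S box of u = N box of v
    obtain ⟨p, hp, hpD, hpB⟩ := hS
    have hpB' : p.1 ∈ translateSet (sPt ℓ v) (box (4*ℓ) (7*ℓ) ℓ) :=
      transfer _ _ _ _ _ (by rw [hv1]) (by rw [hv2]; push_cast; ring) hpB
    exact ⟨p, hp, ⟨hpD, Set.image_mono boxS_subset_cb hpB⟩,
      Set.image_mono (boxN_subset_diamond hℓ) hpB', Set.image_mono boxN_subset_cb hpB'⟩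

theorem stmt_14 (R₀ R₁ ℓ : ℝ) (hR₀ : 0 < R₀) (hR₀₁ : R₀ ≤ R₁)
    (hℓ : 2 * R₁ + 2 * R₀ < ℓ)
    (ω : Set (EuclideanSpace ℝ (Fin 2) × ℝ))
    (hrad : ∀ p ∈ ω, p.2 ∈ Set.Icc R₀ R₁)
    (hlf : ∀ A : Set (EuclideanSpace ℝ (Fin 2)), Bornology.IsBounded A →
      {p ∈ ω | p.1 ∈ A}.Finite)
    (hperc : ∃ S : Set (ℤ × ℤ), S.Infinite ∧ (∀ v ∈ S, xi ℓ ω v) ∧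
      ∀ u ∈ S, ∀ v ∈ S,
        Relation.ReflTransGen (fun a b => adjZ a b ∧ a ∈ S ∧ b ∈ S) u v) :
    ∃ C : Set (EuclideanSpace ℝ (Fin 2)),
      (∃ z ∈ surfaceS ω, C = connectedComponentIn (surfaceS ω) z) ∧
      ¬ Bornology.IsBounded C := by
  have hℓ0 : (0:ℝ) < ℓ := by linarith
  have hpos : ∀ p ∈ ω, 0 < p.2 := fun p hp => lt_of_lt_of_le hR₀ (hrad p hp).1
  obtain ⟨S, hSinf, hxiS, hpath⟩ := hperc
  obtain ⟨u₀, hu₀⟩ := hSinf.nonempty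
  obtain ⟨p₀, hp₀ω, hp₀D, hp₀B⟩ := (xi_def.mp (hxiS u₀ hu₀)).1.1
  have hp₀CB : p₀.1 ∈ sCB ℓ u₀ := Set.image_mono boxN_subset_cb hp₀B
  have hp₀S : p₀.1 ∈ surfaceS ω := surfaceInS_subset_surfaceS ω (sD ℓ u₀)
    ⟨p₀, hp₀ω, hp₀D, Metric.mem_closedBall_self (hpos p₀ hp₀ω).le⟩
  set Z := connectedComponentIn (surfaceS ω) p₀.1 with hZdef
  have step : ∀ v : ℤ × ℤ, xi ℓ ω v → ∀ p ∈ ω, p.1 ∈ sD ℓ v → p.1 ∈ sCB ℓ v → p.1 ∈ Z →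
      ∀ q ∈ ω, q.1 ∈ sD ℓ v → q.1 ∈ sCB ℓ v → q.1 ∈ Z := by
    intro v hv p hp hpD hpB hpZ q hq hqD hqB
    have hcomp := comp_eq_of_card hpos hv hq hp hqD hqB hpD hpB
    have hq1 : q.1 ∈ sSurf ℓ ω v := ⟨q, hq, hqD, Metric.mem_closedBall_self (hpos q hq).le⟩
    have hp1 : p.1 ∈ sSurf ℓ ω v := ⟨p, hp, hpD, Metric.mem_closedBall_self (hpos p hp).le⟩
    have hqK : q.1 ∈ connectedComponentIn (sSurf ℓ ω v) p.1 := by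
      rw [← hcomp]; exact mem_connectedComponentIn hq1
    have hKsub : connectedComponentIn (sSurf ℓ ω v) p.1 ⊆
        connectedComponentIn (surfaceS ω) p.1 :=
      isPreconnected_connectedComponentIn.subset_connectedComponentIn
        (mem_connectedComponentIn hp1)
        ((connectedComponentIn_subset _ _).trans (surfaceInS_subset_surfaceS ω _))
    rw [hZdef] at hpZ ⊢
    rw [connectedComponentIn_eq hpZ]
    exact hKsub hqK
  have hZmem : ∀ v ∈ S, ∀ q ∈ ω, q.1 ∈ sD ℓ v → q.1 ∈ sCB ℓ v → q.1 ∈ Z := by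
    intro v hv
    have hpath' := hpath u₀ hu₀ v hv
    clear hv
    induction hpath' with
    | refl =>
      exact step u₀ (hxiS u₀ hu₀) p₀ hp₀ω hp₀D hp₀CB (mem_connectedComponentIn hp₀S)
    | @tail b c hbpath hr ih =>
      obtain ⟨hadj, hbS, hcS⟩ := hr
      obtain ⟨p, hpω, ⟨hpDb, hpBb⟩, hpDc, hpBc⟩ := shared_germ hℓ0 hadj (hxiS b hbS)
      exact step c (hxiS c hcS) p hpω hpDc hpBc (ih p hpω hpDb hpBb)
  refine ⟨Z, ⟨p₀.1, hp₀S, hZdef⟩, ?_⟩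
  intro hbdd
  obtain ⟨M, hM⟩ := isBounded_iff_forall_norm_le.mp hbdd
  set n : ℤ := max 1 ⌈(M + 8 * ℓ) / (6 * ℓ)⌉ with hn
  have h6 : (0:ℝ) < 6 * ℓ := by linarith
  have hub : M + 8 * ℓ ≤ (n : ℝ) * (6 * ℓ) := by
    rw [← div_le_iff₀ h6]
    calc (M + 8 * ℓ) / (6 * ℓ) ≤ (⌈(M + 8 * ℓ) / (6 * ℓ)⌉ : ℝ) := Int.le_ceil _
    _ ≤ (n : ℝ) := by exact_mod_cast le_max_right 1 ⌈(M + 8 * ℓ) / (6 * ℓ)⌉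
  apply hSinf
  apply Set.Finite.subset (Set.finite_Icc ((-n, -n) : ℤ × ℤ) (n, n))
  intro v hv
  obtain ⟨q, hqω, hqD, hqB⟩ := (xi_def.mp (hxiS v hv)).1.1
  have hqZ : q.1 ∈ Z := hZmem v hv q hqω hqD (Set.image_mono boxN_subset_cb hqB)
  have hnorm : ‖q.1‖ ≤ M := hM _ hqZ
  rw [sPt, mem_translateSet_box] at hqB
  obtain ⟨⟨h1, h2⟩, h3, h4⟩ := hqB
  have c0 := abs_le.mp (coord_norm_le q.1 0)
  have c1 := abs_le.mp (coord_norm_le q.1 1)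
  have hv1u : (v.1 : ℝ) ≤ (n : ℝ) := by
    rw [← mul_le_mul_iff_of_pos_right h6]; nlinarith [c0.2, hnorm]
  have hv1l : (-(n:ℤ) : ℝ) ≤ (v.1 : ℝ) := by
    push_cast
    rw [← mul_le_mul_iff_of_pos_right h6]; nlinarith [c0.1, hnorm]
  have hv2u : (v.2 : ℝ) ≤ (n : ℝ) := by
    rw [← mul_le_mul_iff_of_pos_right h6]; nlinarith [c1.2, hnorm]
  have hv2l : (-(n:ℤ) : ℝ) ≤ (v.2 : ℝ) := by
    push_cast
    rw [← mul_le_mul_iff_of_pos_right h6]; nlinarith [c1.1, hnorm]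
  refine Set.mem_Icc.mpr ⟨?_, ?_⟩ <;> rw [Prod.le_def] <;> constructor
  · show -n ≤ v.1; exact_mod_cast hv1l
  · show -n ≤ v.2; exact_mod_cast hv2l
  · show v.1 ≤ n; exact_mod_cast hv1u
  · show v.2 ≤ n; exact_mod_cast hv2u
end
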